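/- Let ψ:(0,∞)→(0,∞) be non-decreasing with ∫₀^r s/ψ(s) ds < ∞ for every r>0, and let Φ(r) := r²/(2∫₀^r s/ψ(s) ds). Let a∈(0,∞). Then: (1) there exists c∈(0,1] with c·ψ(r) ≤ Φ(r) for all 0<r<a if and only if there exist β∈(0,2) and C≥1 such that ψ satisfies U_a(β,C); likewise, there exists c∈(0,1] with c·ψ(r) ≤ Φ(r) for all r>0 if and only if there exist β∈(0,2) and C≥1 such that ψ satisfies the global condition U(β,C); (2) there exists c∈(0,1] with c·ψ(r) ≤ Φ(r) for all r≥a if and only if there exist β∈(0,2) and C≥1 such that ψ satisfies U^a(β,C). -/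

import Mathlib

open MeasureTheory Set

noncomputable def Iψ (ψ : ℝ → ℝ) (r : ℝ) : ℝ := ∫ s in Ioo (0:ℝ) r, s / ψ s

lemma ioo_int_id (x y : ℝ) (h : x ≤ y) : ∫ s in Ioo x y, s = (y^2 - x^2)/2 := by
  rw [← integral_Ioc_eq_integral_Ioo, ← intervalIntegral.integral_of_le h, integral_id]

lemma ioo_int_rpow (r p : ℝ) (hp : -1 < p) (hr : 0 < r) :
    ∫ s in Ioo (0:ℝ) r, s ^ p = r^(p+1)/(p+1) := by
  rw [← integral_Ioc_eq_integral_Ioo, ← intervalIntegral.integral_of_le hr.le,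
    integral_rpow (Or.inl hp), Real.zero_rpow (by linarith)]
  ring

lemma ioo_intgrble_rpow (r p : ℝ) (hp : -1 < p) :
    IntegrableOn (fun s => s ^ p) (Ioo (0:ℝ) r) :=
  (intervalIntegral.intervalIntegrable_rpow' (a := 0) (b := r) hp).1.mono_set
    Ioo_subset_Ioc_self

section main
variable {ψ : ℝ → ℝ} (hψ_pos : ∀ r : ℝ, 0 < r → 0 < ψ r)
    (hψ_mono : ∀ r s : ℝ, 0 < r → r ≤ s → ψ r ≤ ψ s)
    (hψ_int : ∀ r : ℝ, 0 < r → IntegrableOn (fun s => s / ψ s) (Ioo 0 r))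

include hψ_pos hψ_mono hψ_int

lemma I_lb (r : ℝ) (hr : 0 < r) : r^2/(2 * ψ r) ≤ Iψ ψ r := by
  have h1 : ∫ s in Ioo (0:ℝ) r, s / ψ r ≤ Iψ ψ r := by
    apply setIntegral_mono_on
    · exact Integrable.div_const (f := fun s => s)
        (by have := ioo_intgrble_rpow r 1 (by norm_num); simp at this; exact this) (ψ r)
    · exact hψ_int r hr
    · exact measurableSet_Ioo
    · intro s hs
      exact div_le_div_of_nonneg_left hs.1.le (hψ_pos s hs.1) (hψ_mono s r hs.1 hs.2.le)
  calc r^2/(2*ψ r) = (∫ s in Ioo (0:ℝ) r, s) / ψ r := by rw [ioo_int_id _ _ hr.le]; ring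
    _ = ∫ s in Ioo (0:ℝ) r, s / ψ r := by rw [MeasureTheory.integral_div]
    _ ≤ _ := h1

lemma I_pos (r : ℝ) (hr : 0 < r) : 0 < Iψ ψ r := by
  refine lt_of_lt_of_le ?_ (I_lb hψ_pos hψ_mono hψ_int r hr)
  have := hψ_pos r hr; positivity

lemma I_mono (r R : ℝ) (hr : 0 < r) (hrR : r ≤ R) : Iψ ψ r ≤ Iψ ψ R := by
  apply setIntegral_mono_set (hψ_int R (hr.trans_le hrR))
  · filter_upwards [ae_restrict_mem measurableSet_Ioo] with s hs
    exact div_nonneg hs.1.le (hψ_pos s hs.1).le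
  · exact (Ioo_subset_Ioo_right hrR).eventuallyLE

lemma I_split (r R : ℝ) (hr : 0 < r) (hrR : r ≤ R) :
    Iψ ψ R = Iψ ψ r + ∫ s in Ioo r R, s / ψ s := by
  have hR : 0 < R := hr.trans_le hrR
  have h1 : Ioo (0:ℝ) R = Ioo 0 r ∪ Ico r R := by
    rw [Ioo_union_Ico_eq_Ioo hr hrR]
  have h2 : IntegrableOn (fun s => s / ψ s) (Ico r R) := by
    exact (hψ_int R hR).mono_set (fun x hx => ⟨hr.trans_le hx.1, hx.2⟩)
  rw [Iψ, h1, setIntegral_union (by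
      intro u hu hv x hx
      exact absurd ((hv hx).1) (not_le.mpr (hu hx).2)) measurableSet_Ico
    ((hψ_int R hR).mono_set (Ioo_subset_Ioo_right hrR)) h2,
    integral_Ico_eq_integral_Ioo]
  rfl
end main

section fwd
variable {ψ Φ : ℝ → ℝ} (hψ_pos : ∀ r : ℝ, 0 < r → 0 < ψ r)
    (hψ_mono : ∀ r s : ℝ, 0 < r → r ≤ s → ψ r ≤ ψ s)
    (hψ_int : ∀ r : ℝ, 0 < r → IntegrableOn (fun s => s / ψ s) (Ioo 0 r))
    (hΦ : ∀ r : ℝ, 0 < r → Φ r = r ^ 2 / (2 * ∫ s in Ioo (0:ℝ) r, s / ψ s))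

include hψ_pos hψ_mono hψ_int hΦ

-- if c ψ t ≤ Φ t for t, then ψ t ≤ t²/(2 c Iψ t)
lemma psi_ub {c t : ℝ} (hc : 0 < c) (ht : 0 < t) (h : c * ψ t ≤ Φ t) :
    ψ t ≤ t^2 / (2 * c * Iψ ψ t) := by
  have hI := I_pos hψ_pos hψ_mono hψ_int t ht
  rw [hΦ t ht] at h
  rw [le_div_iff₀ (by positivity)]
  rw [le_div_iff₀ (by positivity)] at h
  show ψ t * (2 * c * Iψ ψ t) ≤ t ^ 2
  calc ψ t * (2 * c * Iψ ψ t) = c * ψ t * (2 * Iψ ψ t) := by ring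
    _ ≤ t ^ 2 := h

lemma doubling {c s : ℝ} (hc : 0 < c) (hs : 0 < s)
    (h : ∀ t, s ≤ t → t ≤ 2*s → c * ψ t ≤ Φ t) :
    (1 + 3*c/4) * Iψ ψ s ≤ Iψ ψ (2*s) := by
  have hIs := I_pos hψ_pos hψ_mono hψ_int s hs
  have key : ∀ t ∈ Ioo s (2*s), t * (c * Iψ ψ s / (2*s^2)) ≤ t / ψ t := by
    intro t ht
    have ht0 : 0 < t := hs.trans ht.1
    have hub := psi_ub hψ_pos hψ_mono hψ_int hΦ hc ht0 (h t ht.1.le ht.2.le)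
    have hIts : Iψ ψ s ≤ Iψ ψ t := I_mono hψ_pos hψ_mono hψ_int s t hs ht.1.le
    have hψt : 0 < ψ t := hψ_pos t ht0
    have hIt := I_pos hψ_pos hψ_mono hψ_int t ht0
    have h2 : ψ t * (c * Iψ ψ s) ≤ 2*s^2 := by
      have h2a : ψ t * (2 * c * Iψ ψ t) ≤ t ^ 2 := by
        rw [le_div_iff₀ (by nlinarith)] at hub; exact hub
      have e1 : ψ t * (c * Iψ ψ s) ≤ ψ t * (c * Iψ ψ t) :=
        mul_le_mul_of_nonneg_left (mul_le_mul_of_nonneg_left hIts hc.le) hψt.le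
      nlinarith [e1, h2a, ht.2, ht0]
    have hA : c * Iψ ψ s / (2*s^2) * ψ t ≤ 1 := by
      rw [div_mul_eq_mul_div, div_le_one (by positivity)]
      nlinarith
    rw [le_div_iff₀ hψt]
    calc t * (c * Iψ ψ s / (2*s^2)) * ψ t = t * (c * Iψ ψ s / (2*s^2) * ψ t) := by ring
      _ ≤ t * 1 := mul_le_mul_of_nonneg_left hA ht0.le
      _ = t := mul_one t
  have hint : ∫ t in Ioo s (2*s), t * (c * Iψ ψ s / (2*s^2)) ≤ ∫ t in Ioo s (2*s), t / ψ t := by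
    apply setIntegral_mono_on
    · have hid : IntegrableOn (fun t : ℝ => t) (Ioo s (2*s)) := by
        have h0 := (intervalIntegral.intervalIntegrable_id (a := s) (b := 2*s)
          (μ := volume)).1
        exact h0.mono_set Ioo_subset_Ioc_self
      exact hid.mul_const _
    · exact (hψ_int (2*s) (by positivity)).mono_set (Ioo_subset_Ioo_left hs.le)
    · exact measurableSet_Ioo
    · exact key
  have hval : ∫ t in Ioo s (2*s), t * (c * Iψ ψ s / (2*s^2)) = (3*c/4) * Iψ ψ s := by
    rw [integral_mul_const, ioo_int_id s (2*s) (by linarith)]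
    field_simp
    ring
  have hsplit := I_split hψ_pos hψ_mono hψ_int s (2*s) hs (by linarith)
  rw [hsplit]
  rw [hval] at hint
  linarith
end fwd

section fwd2
variable {ψ Φ : ℝ → ℝ} (hψ_pos : ∀ r : ℝ, 0 < r → 0 < ψ r)
    (hψ_mono : ∀ r s : ℝ, 0 < r → r ≤ s → ψ r ≤ ψ s)
    (hψ_int : ∀ r : ℝ, 0 < r → IntegrableOn (fun s => s / ψ s) (Ioo 0 r))
    (hΦ : ∀ r : ℝ, 0 < r → Φ r = r ^ 2 / (2 * ∫ s in Ioo (0:ℝ) r, s / ψ s))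

include hψ_pos hψ_mono hψ_int hΦ

lemma iterate {c r R : ℝ} (hc : 0 < c) (hr : 0 < r) (hrR : r ≤ R)
    (h : ∀ t, r ≤ t → t ≤ R → c * ψ t ≤ Φ t) :
    ∀ n : ℕ, r * 2^n ≤ R → (1 + 3*c/4)^n * Iψ ψ r ≤ Iψ ψ (r * 2^n) := by
  intro n
  induction n with
  | zero => intro _; simp
  | succ n ih =>
    intro hn
    have h2n : (0:ℝ) < 2^n := by positivity
    have hle : r * 2^n ≤ R := by
      refine le_trans ?_ hn
      have : (2:ℝ)^n ≤ 2^(n+1) := by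
        apply pow_le_pow_right₀ (by norm_num) (by omega)
      nlinarith
    have ihh := ih hle
    have hs : 0 < r * 2^n := by positivity
    have hdub := doubling hψ_pos hψ_mono hψ_int hΦ hc hs (fun t ht1 ht2 => by
      refine h t ?_ ?_
      · have h1 : (1:ℝ) ≤ 2^n := one_le_pow₀ (by norm_num)
        nlinarith
      · calc t ≤ 2*(r*2^n) := ht2
          _ = r * 2^(n+1) := by ring
          _ ≤ R := hn)
    have heq : 2*(r*2^n) = r*2^(n+1) := by ring
    rw [heq] at hdub
    have hIr : 0 < Iψ ψ r := I_pos hψ_pos hψ_mono hψ_int r hr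
    calc (1 + 3*c/4)^(n+1) * Iψ ψ r = (1+3*c/4) * ((1+3*c/4)^n * Iψ ψ r) := by ring
      _ ≤ (1+3*c/4) * Iψ ψ (r*2^n) := by
          apply mul_le_mul_of_nonneg_left ihh (by linarith)
      _ ≤ Iψ ψ (r*2^(n+1)) := hdub

lemma forward {S : Set ℝ} (hS : S.OrdConnected) (hSpos : S ⊆ Ioi 0) {c : ℝ}
    (hc : 0 < c) (hc1 : c ≤ 1) (h : ∀ t ∈ S, c * ψ t ≤ Φ t) :
    ∀ r R : ℝ, r ∈ S → R ∈ S → r ≤ R →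
      ψ R / ψ r ≤ ((1 + 3*c/4)/c) * (R/r) ^ (2 - Real.logb 2 (1 + 3*c/4)) := by
  intro r R hrS hRS hrR
  set lam : ℝ := 1 + 3*c/4 with hlamdef
  set γ : ℝ := Real.logb 2 lam with hγdef
  have hr : 0 < r := hSpos hrS
  have hR : 0 < R := hSpos hRS
  have hlam : 1 < lam := by rw [hlamdef]; linarith
  have hx1 : 1 ≤ R/r := (one_le_div hr).mpr hrR
  have hx0 : 0 < R/r := by positivity
  set n : ℕ := ⌊Real.logb 2 (R/r)⌋₊ with hndef
  have hlogbnn : 0 ≤ Real.logb 2 (R/r) := Real.logb_nonneg one_lt_two hx1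
  have hfl : (n:ℝ) ≤ Real.logb 2 (R/r) := Nat.floor_le hlogbnn
  have hfl2 : Real.logb 2 (R/r) < n + 1 := Nat.lt_floor_add_one _
  have hpow_le : (2:ℝ)^n ≤ R/r := by
    have : (2:ℝ)^(n:ℝ) ≤ 2^(Real.logb 2 (R/r)) :=
      Real.rpow_le_rpow_of_exponent_le one_le_two hfl
    rw [Real.rpow_natCast, Real.rpow_logb two_pos (by norm_num) hx0] at this
    exact this
  have hrn : r * 2^n ≤ R := by
    calc r * 2^n ≤ r * (R/r) := mul_le_mul_of_nonneg_left hpow_le hr.le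
      _ = R := by field_simp
  have hit := iterate hψ_pos hψ_mono hψ_int hΦ hc hr hrR
    (fun t ht1 ht2 => h t (hS.out hrS hRS ⟨ht1, ht2⟩)) n hrn
  have hImono : Iψ ψ (r*2^n) ≤ Iψ ψ R :=
    I_mono hψ_pos hψ_mono hψ_int _ _ (by positivity) hrn
  -- lam^n ≥ (R/r)^γ / lam
  have hlampow : (R/r)^γ ≤ lam * lam^n := by
    have h1 : lam^(Real.logb 2 (R/r)) ≤ lam^((n:ℝ)+1) :=
      Real.rpow_le_rpow_of_exponent_le hlam.le (by linarith)
    have h2 : lam^((n:ℝ)+1) = lam * lam^n := by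
      rw [Real.rpow_add (by linarith), Real.rpow_one, Real.rpow_natCast]; ring
    have h3 : lam^(Real.logb 2 (R/r)) = (R/r)^γ := by
      rw [Real.rpow_def_of_pos (by linarith : (0:ℝ) < lam),
        Real.rpow_def_of_pos hx0, hγdef, Real.logb, Real.logb]
      ring_nf
    rw [← h3, ← h2]; exact h1
  set A := Iψ ψ r with hA
  set B := Iψ ψ R with hB
  have hApos : 0 < A := I_pos hψ_pos hψ_mono hψ_int r hr
  have hBpos : 0 < B := I_pos hψ_pos hψ_mono hψ_int R hR
  have hkey : (R/r)^γ * A ≤ lam * B := by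
    have hln : 0 < lam^n := by positivity
    calc (R/r)^γ * A ≤ (lam * lam^n) * A := by
          apply mul_le_mul_of_nonneg_right hlampow hApos.le
      _ = lam * (lam^n * A) := by ring
      _ ≤ lam * B := by
          apply mul_le_mul_of_nonneg_left (hit.trans hImono) (by linarith)
  have hψRub : ψ R ≤ R^2/(2*c*B) := psi_ub hψ_pos hψ_mono hψ_int hΦ hc hR (h R hRS)
  have hψrlb : r^2/(2*A) ≤ ψ r := by
    have := I_lb hψ_pos hψ_mono hψ_int r hr
    have hψr := hψ_pos r hr
    rw [div_le_iff₀ (by positivity)] at this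
    rw [div_le_iff₀ (by positivity)]
    nlinarith
  have hψr := hψ_pos r hr
  have hstep : ψ R / ψ r ≤ (R^2/(2*c*B)) / (r^2/(2*A)) :=
    div_le_div₀ (by positivity) hψRub (by positivity) hψrlb
  have heq2 : (R^2/(2*c*B)) / (r^2/(2*A)) = (R/r)^2 * A / (c*B) := by
    rw [div_pow]; field_simp
  have hxγ : 0 < (R/r)^γ := Real.rpow_pos_of_pos hx0 _
  have hmain2 : (R/r)^2 * A / (c*B) ≤ (lam * (R/r)^2) / (c * (R/r)^γ) := by
    rw [div_le_div_iff₀ (by positivity) (by positivity)]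
    nlinarith [mul_le_mul_of_nonneg_left hkey (by positivity : (0:ℝ) ≤ c * (R/r)^2)]
  have hfin : (lam * (R/r)^2) / (c * (R/r)^γ) = (lam/c) * (R/r)^(2-γ) := by
    rw [Real.rpow_sub hx0, Real.rpow_two]
    field_simp
  calc ψ R / ψ r ≤ (R^2/(2*c*B)) / (r^2/(2*A)) := hstep
    _ = (R/r)^2 * A / (c*B) := heq2
    _ ≤ (lam * (R/r)^2) / (c * (R/r)^γ) := hmain2
    _ = (lam/c) * (R/r)^(2-γ) := hfin
end fwd2

lemma ratio_ub {ψ : ℝ → ℝ} {C β s r : ℝ} (hs : 0 < s) (hsr : s ≤ r)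
    (hψs : 0 < ψ s) (hψr : 0 < ψ r) (hsc : ψ r / ψ s ≤ C * (r/s)^β) :
    s / ψ s ≤ (C * r^β / ψ r) * s^(1-β) := by
  have hr : 0 < r := hs.trans_le hsr
  have hsβ : (0:ℝ) < s^β := Real.rpow_pos_of_pos hs β
  have hrβ : (0:ℝ) < r^β := Real.rpow_pos_of_pos hr β
  have hs1β : (0:ℝ) < s^(1-β) := Real.rpow_pos_of_pos hs _
  have hdiv : (r/s)^β = r^β / s^β := Real.div_rpow hr.le hs.le β
  rw [hdiv, mul_div_assoc'] at hsc
  rw [div_le_div_iff₀ hψs hsβ] at hsc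
  -- hsc : ψ r * s^β ≤ C * r^β * ψ s
  have h1 : s^(1-β) = s / s^β := by
    rw [Real.rpow_sub hs, Real.rpow_one]
  have heq : (C * r^β / ψ r) * s^(1-β) = (C * r^β * s)/(ψ r * s^β) := by
    rw [h1, div_mul_div_comm]
  rw [heq, div_le_div_iff₀ hψs (by positivity)]
  nlinarith [mul_le_mul_of_nonneg_left hsc hs.le]

section bwd
variable {ψ Φ : ℝ → ℝ} (hψ_pos : ∀ r : ℝ, 0 < r → 0 < ψ r)
    (hψ_mono : ∀ r s : ℝ, 0 < r → r ≤ s → ψ r ≤ ψ s)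
    (hψ_int : ∀ r : ℝ, 0 < r → IntegrableOn (fun s => s / ψ s) (Ioo 0 r))
    (hΦ : ∀ r : ℝ, 0 < r → Φ r = r ^ 2 / (2 * ∫ s in Ioo (0:ℝ) r, s / ψ s))

include hψ_pos hψ_int

lemma J_ub {C β : ℝ} (a0 r : ℝ) (ha0 : 0 ≤ a0) (hr : 0 < r) (hβ0 : 0 < β)
    (hβ2 : β < 2) (hC : 0 ≤ C)
    (hsc : ∀ s, a0 < s → s < r → ψ r / ψ s ≤ C * (r/s)^β) :
    ∫ s in Ioo a0 r, s / ψ s ≤ C * r^2 / ((2-β) * ψ r) := by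
  have hψr := hψ_pos r hr
  have hsub : Ioo a0 r ⊆ Ioo 0 r := fun x hx => ⟨lt_of_le_of_lt ha0 hx.1, hx.2⟩
  have hg0 : IntegrableOn (fun s : ℝ => s^(1-β)) (Ioo 0 r) :=
    ioo_intgrble_rpow r (1-β) (by linarith)
  have hgint : IntegrableOn (fun s : ℝ => (C * r^β / ψ r) * s^(1-β)) (Ioo 0 r) :=
    hg0.const_mul _
  have step1 : ∫ s in Ioo a0 r, s / ψ s ≤
      ∫ s in Ioo a0 r, (C * r^β / ψ r) * s^(1-β) := by
    apply setIntegral_mono_on ((hψ_int r hr).mono_set hsub) (hgint.mono_set hsub)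
      measurableSet_Ioo
    intro s hs
    have hs0 : 0 < s := lt_of_le_of_lt ha0 hs.1
    exact ratio_ub hs0 hs.2.le (hψ_pos s hs0) hψr (hsc s hs.1 hs.2)
  have step2 : ∫ s in Ioo a0 r, (C * r^β / ψ r) * s^(1-β) ≤
      ∫ s in Ioo 0 r, (C * r^β / ψ r) * s^(1-β) := by
    apply setIntegral_mono_set hgint
    · filter_upwards [ae_restrict_mem measurableSet_Ioo] with s hs
      have hrβ : (0:ℝ) < r^β := Real.rpow_pos_of_pos hr β
      have : (0:ℝ) ≤ s^(1-β) := (Real.rpow_pos_of_pos hs.1 _).le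
      positivity
    · exact hsub.eventuallyLE
  have step3 : ∫ s in Ioo (0:ℝ) r, (C * r^β / ψ r) * s^(1-β)
      = (C * r^β / ψ r) * (r^(2-β)/(2-β)) := by
    rw [MeasureTheory.integral_const_mul, ioo_int_rpow r (1-β) (by linarith) hr]
    norm_num
    left
    have : 1 - β + 1 = 2 - β := by ring
    rw [this]
  have hmul : r^β * r^(2-β) = r^2 := by
    rw [← Real.rpow_add hr]
    norm_num [Real.rpow_two]
  have step4 : (C * r^β / ψ r) * (r^(2-β)/(2-β)) = C * r^2 / ((2-β) * ψ r) := by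
    rw [← hmul]; field_simp
  linarith [step1, step2, step3.le, step3.ge, step4.le, step4.ge]

end bwd

section bwd2
variable {ψ Φ : ℝ → ℝ} (hψ_pos : ∀ r : ℝ, 0 < r → 0 < ψ r)
    (hψ_mono : ∀ r s : ℝ, 0 < r → r ≤ s → ψ r ≤ ψ s)
    (hψ_int : ∀ r : ℝ, 0 < r → IntegrableOn (fun s => s / ψ s) (Ioo 0 r))
    (hΦ : ∀ r : ℝ, 0 < r → Φ r = r ^ 2 / (2 * ∫ s in Ioo (0:ℝ) r, s / ψ s))

include hψ_pos hψ_mono hψ_int hΦ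

lemma Phi_lb {K r : ℝ} (hr : 0 < r) (hK : 0 < K)
    (hIub : Iψ ψ r ≤ K * (r^2 / ψ r)) : (1/(2*K)) * ψ r ≤ Φ r := by
  rw [hΦ r hr]
  show (1/(2*K)) * ψ r ≤ r^2 / (2 * Iψ ψ r)
  have hI := I_pos hψ_pos hψ_mono hψ_int r hr
  have hψr := hψ_pos r hr
  have h1 : Iψ ψ r * ψ r ≤ K * r^2 := by
    have := mul_le_mul_of_nonneg_right hIub hψr.le
    calc Iψ ψ r * ψ r ≤ K * (r^2/ψ r) * ψ r := this
      _ = K * r^2 := by field_simp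
  rw [le_div_iff₀ (by positivity)]
  have heq : (1/(2*K)) * ψ r * (2 * Iψ ψ r) = (ψ r * Iψ ψ r) / K := by
    field_simp
  rw [heq, div_le_iff₀ hK]
  nlinarith
end bwd2

section assemble
variable {ψ Φ : ℝ → ℝ} (hψ_pos : ∀ r : ℝ, 0 < r → 0 < ψ r)
    (hψ_mono : ∀ r s : ℝ, 0 < r → r ≤ s → ψ r ≤ ψ s)
    (hψ_int : ∀ r : ℝ, 0 < r → IntegrableOn (fun s => s / ψ s) (Ioo 0 r))
    (hΦ : ∀ r : ℝ, 0 < r → Φ r = r ^ 2 / (2 * ∫ s in Ioo (0:ℝ) r, s / ψ s))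

include hψ_pos hψ_mono hψ_int hΦ

lemma forward_pack {S : Set ℝ} (hS : S.OrdConnected) (hSpos : S ⊆ Ioi 0)
    (hex : ∃ c : ℝ, 0 < c ∧ c ≤ 1 ∧ ∀ t ∈ S, c * ψ t ≤ Φ t) :
    ∃ β C : ℝ, 0 < β ∧ β < 2 ∧ 1 ≤ C ∧
      ∀ r R : ℝ, r ∈ S → R ∈ S → r ≤ R → ψ R / ψ r ≤ C * (R / r) ^ β := by
  obtain ⟨c, hc, hc1, h⟩ := hex
  have hlam : 1 < 1 + 3*c/4 := by linarith
  have hlam4 : 1 + 3*c/4 < 4 := by linarith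
  refine ⟨2 - Real.logb 2 (1 + 3*c/4), (1 + 3*c/4)/c, ?_, ?_, ?_, ?_⟩
  · have : Real.logb 2 (1 + 3*c/4) < 2 := by
      calc Real.logb 2 (1 + 3*c/4) < Real.logb 2 4 :=
            Real.logb_lt_logb (by norm_num) (by linarith) hlam4
        _ = 2 := by
          rw [show (4:ℝ) = 2^(2:ℝ) by rw [Real.rpow_two]; norm_num,
            Real.logb_rpow (by norm_num) (by norm_num)]
    linarith
  · have := Real.logb_pos (by norm_num : (1:ℝ) < 2) hlam
    linarith
  · exact (one_le_div hc).mpr (by linarith)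
  · exact fun r R hr hR hrR =>
      forward hψ_pos hψ_mono hψ_int hΦ hS hSpos hc hc1 h r R hr hR hrR

lemma backward_pt {C β : ℝ} (hβ0 : 0 < β) (hβ2 : β < 2) (hC : 1 ≤ C)
    {r : ℝ} (hr : 0 < r)
    (hsc : ∀ s, 0 < s → s < r → ψ r / ψ s ≤ C * (r/s)^β) :
    (1/(2*(C/(2-β)))) * ψ r ≤ Φ r := by
  have hψr := hψ_pos r hr
  apply Phi_lb hψ_pos hψ_mono hψ_int hΦ hr (div_pos (by linarith) (by linarith))
  have hJ := J_ub hψ_pos hψ_int (a0 := 0) r le_rfl hr hβ0 hβ2 (by linarith) hsc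
  refine hJ.trans_eq ?_
  field_simp

lemma backward3 {C β : ℝ} {a : ℝ} (ha : 0 < a) (hβ0 : 0 < β) (hβ2 : β < 2)
    (hC : 1 ≤ C) (hsc : ∀ r R, a ≤ r → r ≤ R → ψ R / ψ r ≤ C * (R/r)^β) :
    ∃ c : ℝ, 0 < c ∧ c ≤ 1 ∧ ∀ r, a ≤ r → c * ψ r ≤ Φ r := by
  have hIa : 0 < Iψ ψ a := I_pos hψ_pos hψ_mono hψ_int a ha
  have hψa := hψ_pos a ha
  obtain ⟨K, hKdef⟩ : ∃ K : ℝ, K = Iψ ψ a * C * ψ a / a^2 + C/(2-β) := ⟨_, rfl⟩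
  have hK1 : (0:ℝ) < Iψ ψ a * C * ψ a / a^2 := by positivity
  have hhalf : (1:ℝ)/2 ≤ C/(2-β) := by
    rw [div_le_div_iff₀ (by norm_num) (by linarith)]
    linarith
  have hK : 0 < K := by rw [hKdef]; nlinarith
  refine ⟨1/(2*K), by positivity, ?_, ?_⟩
  · rw [div_le_one (by positivity)]; nlinarith [hKdef.le, hKdef.ge]
  intro r har
  have hr : 0 < r := lt_of_lt_of_le ha har
  have hψr := hψ_pos r hr
  apply Phi_lb hψ_pos hψ_mono hψ_int hΦ hr hK
  have hsplit := I_split hψ_pos hψ_mono hψ_int a r ha har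
  have hJ : ∫ s in Ioo a r, s / ψ s ≤ C * r^2/((2-β) * ψ r) :=
    J_ub hψ_pos hψ_int a r ha.le hr hβ0 hβ2 (by linarith)
      (fun s hs1 hs2 => hsc s r (by linarith) hs2.le)
  have hJ' : ∫ s in Ioo a r, s / ψ s ≤ (C/(2-β)) * (r^2/ψ r) := by
    refine hJ.trans_eq ?_; field_simp
  have hx1 : 1 ≤ r/a := (one_le_div ha).mpr har
  have h1 : ψ r / ψ a ≤ C*(r/a)^β := hsc a r le_rfl har
  have h2 : (r/a)^β ≤ (r/a)^2 := by
    calc (r/a)^β ≤ (r/a)^(2:ℝ) := Real.rpow_le_rpow_of_exponent_le hx1 hβ2.le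
      _ = (r/a)^2 := Real.rpow_two _
  have h3 : ψ r ≤ C*ψ a*(r/a)^2 := by
    rw [div_le_iff₀ hψa] at h1
    nlinarith [Real.rpow_pos_of_pos (div_pos hr ha) β]
  have h4 : Iψ ψ a * ψ r ≤ (Iψ ψ a * C * ψ a / a^2) * r^2 := by
    have := mul_le_mul_of_nonneg_left h3 hIa.le
    calc Iψ ψ a * ψ r ≤ Iψ ψ a * (C*ψ a*(r/a)^2) := this
      _ = (Iψ ψ a * C * ψ a / a^2)*r^2 := by field_simp
  have hIa' : Iψ ψ a ≤ (Iψ ψ a * C * ψ a / a^2) * (r^2/ψ r) := by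
    rw [mul_div_assoc'] at *
    rw [le_div_iff₀ hψr]
    convert h4 using 1
  calc Iψ ψ r = Iψ ψ a + ∫ s in Ioo a r, s / ψ s := hsplit
    _ ≤ (Iψ ψ a * C * ψ a / a^2) * (r^2/ψ r) + (C/(2-β)) * (r^2/ψ r) := by
        exact add_le_add hIa' hJ'
    _ = K * (r^2/ψ r) := by rw [hKdef]; ring
end assemble

/-- With `Φ(r) = r²/(2∫₀^r s/ψ(s) ds)` for a non-decreasing
`ψ : (0,∞) → (0,∞)` and `a ∈ (0,∞)`:
(1) `∃ c ∈ (0,1]` with `c ψ(r) ≤ Φ(r)` for all `0 < r < a` iff `ψ` satisfies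
`U_a(β,C)` for some `β ∈ (0,2)`, `C ≥ 1`; likewise with "for all `r > 0`" and the
global condition `U(β,C)`;
(2) `∃ c ∈ (0,1]` with `c ψ(r) ≤ Φ(r)` for all `r ≥ a` iff `ψ` satisfies
`U^a(β,C)` for some `β ∈ (0,2)`, `C ≥ 1`. -/
theorem stmt_7 (ψ Φ : ℝ → ℝ)
    (hψ_pos : ∀ r : ℝ, 0 < r → 0 < ψ r)
    (hψ_mono : ∀ r s : ℝ, 0 < r → r ≤ s → ψ r ≤ ψ s)
    (hψ_int : ∀ r : ℝ, 0 < r → IntegrableOn (fun s => s / ψ s) (Ioo 0 r))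
    (hΦ : ∀ r : ℝ, 0 < r → Φ r = r ^ 2 / (2 * ∫ s in Ioo (0:ℝ) r, s / ψ s))
    (a : ℝ) (ha : 0 < a) :
    ((∃ c : ℝ, 0 < c ∧ c ≤ 1 ∧ ∀ r : ℝ, 0 < r → r < a → c * ψ r ≤ Φ r) ↔
      (∃ β C : ℝ, 0 < β ∧ β < 2 ∧ 1 ≤ C ∧
        ∀ r R : ℝ, 0 < r → r ≤ R → R < a → ψ R / ψ r ≤ C * (R / r) ^ β)) ∧
    ((∃ c : ℝ, 0 < c ∧ c ≤ 1 ∧ ∀ r : ℝ, 0 < r → c * ψ r ≤ Φ r) ↔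
      (∃ β C : ℝ, 0 < β ∧ β < 2 ∧ 1 ≤ C ∧
        ∀ r R : ℝ, 0 < r → r ≤ R → ψ R / ψ r ≤ C * (R / r) ^ β)) ∧
    ((∃ c : ℝ, 0 < c ∧ c ≤ 1 ∧ ∀ r : ℝ, a ≤ r → c * ψ r ≤ Φ r) ↔
      (∃ β C : ℝ, 0 < β ∧ β < 2 ∧ 1 ≤ C ∧
        ∀ r R : ℝ, a ≤ r → r ≤ R → ψ R / ψ r ≤ C * (R / r) ^ β)) := by
  have bwd_const : ∀ β C : ℝ, 0 < β → β < 2 → 1 ≤ C →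
      0 < 1/(2*(C/(2-β))) ∧ 1/(2*(C/(2-β))) ≤ 1 := by
    intro β C hβ0 hβ2 hC
    have hq : 0 < C/(2-β) := div_pos (by linarith) (by linarith)
    have hhalf : (1:ℝ)/2 ≤ C/(2-β) := by
      rw [div_le_div_iff₀ (by norm_num) (by linarith)]; linarith
    exact ⟨by positivity, by rw [div_le_one (by positivity)]; linarith⟩
  refine ⟨⟨?_, ?_⟩, ⟨?_, ?_⟩, ⟨?_, ?_⟩⟩
  · rintro ⟨c, hc, hc1, h⟩
    obtain ⟨β, C, h1, h2, h3, h4⟩ := forward_pack hψ_pos hψ_mono hψ_int hΦ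
      (S := Ioo 0 a) ordConnected_Ioo (fun x hx => hx.1)
      ⟨c, hc, hc1, fun t ht => h t ht.1 ht.2⟩
    exact ⟨β, C, h1, h2, h3, fun r R hr hrR hRa =>
      h4 r R ⟨hr, lt_of_le_of_lt hrR hRa⟩ ⟨hr.trans_le hrR, hRa⟩ hrR⟩
  · rintro ⟨β, C, hβ0, hβ2, hC, hsc⟩
    obtain ⟨hcpos, hcle⟩ := bwd_const β C hβ0 hβ2 hC
    exact ⟨_, hcpos, hcle, fun r hr hra =>
      backward_pt hψ_pos hψ_mono hψ_int hΦ hβ0 hβ2 hC hr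
        (fun s hs hsr => hsc s r hs hsr.le hra)⟩
  · rintro ⟨c, hc, hc1, h⟩
    obtain ⟨β, C, h1, h2, h3, h4⟩ := forward_pack hψ_pos hψ_mono hψ_int hΦ
      (S := Ioi 0) ordConnected_Ioi (fun x hx => hx)
      ⟨c, hc, hc1, fun t ht => h t ht⟩
    exact ⟨β, C, h1, h2, h3, fun r R hr hrR =>
      h4 r R hr (lt_of_lt_of_le hr hrR) hrR⟩
  · rintro ⟨β, C, hβ0, hβ2, hC, hsc⟩
    obtain ⟨hcpos, hcle⟩ := bwd_const β C hβ0 hβ2 hC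
    exact ⟨_, hcpos, hcle, fun r hr =>
      backward_pt hψ_pos hψ_mono hψ_int hΦ hβ0 hβ2 hC hr
        (fun s hs hsr => hsc s r hs hsr.le)⟩
  · rintro ⟨c, hc, hc1, h⟩
    obtain ⟨β, C, h1, h2, h3, h4⟩ := forward_pack hψ_pos hψ_mono hψ_int hΦ
      (S := Ici a) ordConnected_Ici (fun x hx => lt_of_lt_of_le ha hx)
      ⟨c, hc, hc1, fun t ht => h t ht⟩
    exact ⟨β, C, h1, h2, h3, fun r R hr hrR =>
      h4 r R hr (hr.trans hrR) hrR⟩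
  · rintro ⟨β, C, hβ0, hβ2, hC, hsc⟩
    exact backward3 hψ_pos hψ_mono hψ_int hΦ ha hβ0 hβ2 hC hsc
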